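/- For a fixed invertible n×n matrix B, positive definite A, and −1 ≤ p < 0, one has p·tr((B* A^p B)^{1/p}) = inf over positive definite X of ( tr(A^{p/2} B X^{1−p} B* A^{p/2}) − (1−p)·tr(X) ). -/

import Mathlib

open Matrix ComplexOrder

/-- Functional calculus for Hermitian matrices: apply `f` to the eigenvalues. -/
noncomputable def mfun {m : Type*} [Fintype m] [DecidableEq m] (f : ℝ → ℝ)
    (A : Matrix m m ℂ) : Matrix m m ℂ :=
  if hA : A.IsHermitian then
    (hA.eigenvectorUnitary : Matrix m m ℂ) *
      Matrix.diagonal (fun i => (f (hA.eigenvalues i) : ℂ)) *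
      (star (hA.eigenvectorUnitary : Matrix m m ℂ))
  else 0

/-- Real matrix power via the functional calculus. -/
noncomputable def mpow {m : Type*} [Fintype m] [DecidableEq m]
    (A : Matrix m m ℂ) (p : ℝ) : Matrix m m ℂ :=
  mfun (fun x => x ^ p) A

variable {m : Type*} [Fintype m] [DecidableEq m]

lemma contOn_finite' {s : Set ℝ} (hs : s.Finite) (f : ℝ → ℝ) : ContinuousOn f s := by
  have := hs.to_subtype
  rw [continuousOn_iff_continuous_restrict]
  exact continuous_of_discreteTopology

lemma contOn_finite (f : ℝ → ℝ) (A : Matrix m m ℂ) : ContinuousOn f (spectrum ℝ A) :=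
  contOn_finite' A.finite_real_spectrum f

lemma mfun_eq_cfc {A : Matrix m m ℂ} (hA : A.IsHermitian) (f : ℝ → ℝ) :
    mfun f A = cfc f A := by
  rw [hA.cfc_eq, Matrix.IsHermitian.cfc, mfun, dif_pos hA]; rfl

lemma trace_conj_diag (V : Matrix.unitaryGroup m ℂ) (d : m → ℂ) :
    ((V : Matrix m m ℂ) * Matrix.diagonal d * (star V : Matrix m m ℂ)).trace = ∑ i, d i := by
  rw [Matrix.trace_mul_cycle]
  simp [Unitary.star_mul_self_of_mem (SetLike.coe_mem V), Matrix.trace_diagonal]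

lemma trace_mfun {A : Matrix m m ℂ} (hA : A.IsHermitian) (f : ℝ → ℝ) :
    (mfun f A).trace = ∑ i, (f (hA.eigenvalues i) : ℂ) := by
  rw [mfun, dif_pos hA, trace_conj_diag]

lemma trace_eq_sum_eigenvalues {A : Matrix m m ℂ} (hA : A.IsHermitian) :
    A.trace = ∑ i, (hA.eigenvalues i : ℂ) := by
  conv_lhs => rw [hA.spectral_theorem]
  rw [Unitary.conjStarAlgAut_apply, trace_conj_diag]
  rfl

lemma posDef_conj {M B : Matrix m m ℂ} (hM : M.PosDef) (hB : IsUnit B) :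
    (Bᴴ * M * B).PosDef := by
  refine Matrix.PosDef.of_dotProduct_mulVec_pos (Matrix.isHermitian_conjTranspose_mul_mul B hM.1) fun x hx => ?_
  have hBx : B *ᵥ x ≠ 0 := by
    intro h
    exact hx (Matrix.mulVec_injective_iff_isUnit.mpr hB (by simpa using h))
  have := hM.dotProduct_mulVec_pos hBx
  rw [Matrix.mulVec_mulVec] at this
  rwa [Matrix.mul_assoc, ← Matrix.mulVec_mulVec, dotProduct_mulVec, ← Matrix.star_mulVec]
lemma isUnit_unitary (V : Matrix.unitaryGroup m ℂ) : IsUnit (V : Matrix m m ℂ) :=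
  ⟨⟨(V : Matrix m m ℂ), star (V : Matrix m m ℂ),
    Unitary.coe_mul_star_self V, Unitary.coe_star_mul_self V⟩, rfl⟩

lemma mfun_posDef {A : Matrix m m ℂ} (hA : A.PosDef) (f : ℝ → ℝ)
    (hf : ∀ x, 0 < x → 0 < f x) : (mfun f A).PosDef := by
  rw [mfun, dif_pos hA.1]
  have hD : (Matrix.diagonal (fun i => (f (hA.1.eigenvalues i) : ℂ))).PosDef :=
    Matrix.PosDef.diagonal fun i => by
      rw [Complex.zero_lt_real]
      exact hf _ (hA.eigenvalues_pos i)
  have := posDef_conj hD ((isUnit_unitary hA.1.eigenvectorUnitary).star)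
  simpa [Matrix.star_eq_conjTranspose] using this

lemma spectrum_pos {A : Matrix m m ℂ} (hA : A.PosDef) {x : ℝ}
    (hx : x ∈ spectrum ℝ A) : 0 < x := by
  rw [hA.1.spectrum_real_eq_range_eigenvalues] at hx
  obtain ⟨i, rfl⟩ := hx
  exact hA.eigenvalues_pos i

lemma mpow_posDef {A : Matrix m m ℂ} (hA : A.PosDef) (r : ℝ) : (mpow A r).PosDef :=
  mfun_posDef hA _ fun x hx => Real.rpow_pos_of_pos hx r

lemma mpow_isHermitian {A : Matrix m m ℂ} (hA : A.PosDef) (r : ℝ) : (mpow A r).IsHermitian :=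
  (mpow_posDef hA r).1

lemma mpow_add {A : Matrix m m ℂ} (hA : A.PosDef) (r s : ℝ) :
    mpow A r * mpow A s = mpow A (r + s) := by
  rw [mpow, mpow, mpow, mfun_eq_cfc hA.1, mfun_eq_cfc hA.1, mfun_eq_cfc hA.1,
    ← cfc_mul _ _ A (contOn_finite _ A) (contOn_finite _ A)]
  exact cfc_congr fun x hx => (Real.rpow_add (spectrum_pos hA hx) r s).symm

lemma mpow_one {A : Matrix m m ℂ} (hA : A.PosDef) : mpow A 1 = A := by
  rw [mpow, mfun_eq_cfc hA.1]
  have : cfc (fun x : ℝ => x ^ (1:ℝ)) A = cfc (fun x : ℝ => x) A :=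
    cfc_congr fun x _ => Real.rpow_one x
  rw [this, cfc_id' ℝ A hA.1.isSelfAdjoint]

lemma mpow_comp {A : Matrix m m ℂ} (hA : A.PosDef) (r s : ℝ) :
    mpow (mpow A r) s = mpow A (r * s) := by
  have h1 : mpow A r = cfc (fun x => x ^ r) A := mfun_eq_cfc hA.1 _
  have hsa : (cfc (fun x : ℝ => x ^ r) A).IsHermitian := h1 ▸ mpow_isHermitian hA r
  rw [mpow, h1, mfun_eq_cfc hsa, mpow, mfun_eq_cfc hA.1,
    ← cfc_comp (fun x : ℝ => x ^ s) (fun x : ℝ => x ^ r) A hA.1.isSelfAdjoint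
      (contOn_finite' ((Matrix.finite_real_spectrum (A := A)).image _) _) (contOn_finite _ A)]
  exact cfc_congr fun x hx => (Real.rpow_mul (spectrum_pos hA hx).le r s).symm
open Set

lemma convexOn_rpow_neg {q : ℝ} (hq : q < 0) :
    ConvexOn ℝ (Set.Ioi (0:ℝ)) (fun x : ℝ => x ^ q) := by
  have hint : interior (Set.Ioi (0:ℝ)) = Set.Ioi 0 := isOpen_Ioi.interior_eq
  have hderiv : ∀ x ∈ Set.Ioi (0:ℝ), deriv (fun x : ℝ => x ^ q) x = q * x ^ (q - 1) :=
    fun x hx => Real.deriv_rpow_const x q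
  refine convexOn_of_deriv2_nonneg (convex_Ioi 0) ?_ ?_ ?_ ?_
  · exact fun x hx => (Real.continuousAt_rpow_const x q (Or.inl (ne_of_gt hx))).continuousWithinAt
  · rw [hint]
    exact fun x hx => ((Real.hasDerivAt_rpow_const (p := q) (Or.inl (ne_of_gt hx))).differentiableAt).differentiableWithinAt
  · rw [hint]
    intro x hx
    have : DifferentiableAt ℝ (fun y : ℝ => q * y ^ (q - 1)) x :=
      ((Real.hasDerivAt_rpow_const (p := q - 1) (Or.inl (ne_of_gt hx))).differentiableAt).const_mul q
    refine (this.congr_of_eventuallyEq ?_).differentiableWithinAt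
    filter_upwards [isOpen_Ioi.mem_nhds hx] with y hy using hderiv y hy
  · rw [hint]
    intro x hx
    have h1 : deriv (deriv (fun x : ℝ => x ^ q)) x = deriv (fun y : ℝ => q * y ^ (q - 1)) x := by
      apply Filter.EventuallyEq.deriv_eq
      filter_upwards [isOpen_Ioi.mem_nhds hx] with y hy using hderiv y hy
    have h2 : deriv (fun y : ℝ => q * y ^ (q - 1)) x = q * ((q - 1) * x ^ (q - 1 - 1)) := by
      rw [deriv_const_mul _ ((Real.hasDerivAt_rpow_const (p := q - 1) (Or.inl (ne_of_gt hx))).differentiableAt),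
        Real.deriv_rpow_const]
    simp only [Function.iterate_succ, Function.iterate_zero, Function.comp_apply, id_eq]
    rw [h1, h2]
    have h3 : 0 < x ^ (q - 1 - 1) := Real.rpow_pos_of_pos hx _
    have h4 : 0 < q * (q - 1) := mul_pos_of_neg_of_neg hq (by linarith)
    nlinarith

lemma scalar_young {p : ℝ} (hp1 : p < 0) {x c : ℝ} (hx : 0 < x) (hc : 0 < c) :
    p * c ^ (1/p) ≤ c * x ^ (1-p) - (1-p) * x := by
  have h1p : (0:ℝ) < 1 - p := by linarith
  have key := Real.geom_mean_le_arith_mean2_weighted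
    (w₁ := 1/(1-p)) (w₂ := -p/(1-p)) (p₁ := c * x ^ (1-p)) (p₂ := c ^ (1/p))
    (by positivity) (div_nonneg (by linarith) h1p.le)
    (by positivity) (by positivity)
    (by rw [← add_div, show (1:ℝ) + -p = 1 - p by ring, div_self h1p.ne'])
  have hgm : (c * x ^ (1-p)) ^ (1/(1-p)) * (c ^ (1/p)) ^ (-p/(1-p)) = x := by
    rw [Real.mul_rpow hc.le (Real.rpow_nonneg hx.le _), ← Real.rpow_mul hx.le,
      ← Real.rpow_mul hc.le]
    have e1 : (1-p) * (1/(1-p)) = 1 := by field_simp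
    have e2 : (1/p) * (-p/(1-p)) = -(1/(1-p)) := by
      field_simp
      rw [div_self hp1.ne]
    rw [e1, e2, Real.rpow_one, mul_right_comm, ← Real.rpow_add hc]
    have e3 : 1/(1-p) + -(1/(1-p)) = 0 := by ring
    rw [e3, Real.rpow_zero, one_mul]
  rw [hgm] at key
  have expand : (1-p) * (1/(1-p) * (c * x ^ (1-p)) + -p/(1-p) * c ^ (1/p))
      = c * x ^ (1-p) - p * c ^ (1/p) := by
    field_simp
    ring
  have := mul_le_mul_of_nonneg_left key h1p.le
  rw [expand] at this
  linarith

lemma trace_diagonal_mul (d : m → ℂ) (N : Matrix m m ℂ) :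
    (Matrix.diagonal d * N).trace = ∑ i, d i * N i i := by
  simp [Matrix.trace, Matrix.diag, Matrix.diagonal_mul]

lemma tr_cyclic (P Q Y : Matrix m m ℂ) :
    (P * Q * Y * Qᴴ * P).trace = (Y * (Qᴴ * (P * P) * Q)).trace := by
  have h1 : P * Q * Y * Qᴴ * P = (P * Q * Y) * (Qᴴ * P) := by
    simp only [Matrix.mul_assoc]
  have h2 : (Qᴴ * P) * (P * Q * Y) = (Qᴴ * (P * P) * Q) * Y := by
    simp only [Matrix.mul_assoc]
  rw [h1, Matrix.trace_mul_comm, h2, Matrix.trace_mul_comm]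

lemma posDef_diag_re_pos {N : Matrix m m ℂ} (hN : N.PosDef) (i : m) :
    0 < (N i i).re ∧ (N i i).im = 0 := by
  have h := hN.dotProduct_mulVec_pos (x := Pi.single i 1) (by
    intro h
    simpa using congr_fun h i)
  have he : star (Pi.single i 1 : m → ℂ) ⬝ᵥ N *ᵥ (Pi.single i 1) = N i i := by
    simp [dotProduct, Matrix.mulVec, Pi.single_apply, apply_ite (star : ℂ → ℂ),
      Finset.sum_ite_eq, Finset.mul_sum, Finset.sum_ite_eq']
  rw [he] at h
  rw [Complex.lt_def] at h
  simpa using ⟨h.1, h.2.symm⟩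

lemma lower_bound {A : Matrix m m ℂ} (hA : A.PosDef) {B : Matrix m m ℂ} (hB : IsUnit B)
    {p : ℝ} (hp1 : p < 0) {X : Matrix m m ℂ} (hX : X.PosDef) :
    p * (mpow (Bᴴ * mpow A p * B) (1/p)).trace.re ≤
      (mpow A (p/2) * B * mpow X (1 - p) * Bᴴ * mpow A (p/2)).trace.re -
        (1 - p) * X.trace.re := by
  set M := Bᴴ * mpow A p * B with hMdef
  have hM : M.PosDef := posDef_conj (mpow_posDef hA p) hB
  have htr : (mpow A (p/2) * B * mpow X (1 - p) * Bᴴ * mpow A (p/2)).trace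
      = (mpow X (1-p) * M).trace := by
    rw [tr_cyclic, mpow_add hA, show p/2 + p/2 = p by ring]
  set V := hX.1.eigenvectorUnitary with hV
  set xs := hX.1.eigenvalues with hxs
  set D : Matrix m m ℂ := Matrix.diagonal (fun i => ((xs i ^ (1-p) : ℝ) : ℂ)) with hD
  have hXd : mpow X (1-p) = (V : Matrix m m ℂ) * D * (star (V : Matrix m m ℂ)) := by
    rw [mpow, mfun, dif_pos hX.1]
  set N := (star (V : Matrix m m ℂ)) * M * (V : Matrix m m ℂ) with hNdef
  have hN : N.PosDef := by
    have := posDef_conj hM (isUnit_unitary V)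
    rwa [← Matrix.star_eq_conjTranspose] at this
  have htr2 : (mpow X (1-p) * M).trace = ∑ i, ((xs i ^ (1-p) : ℝ) : ℂ) * N i i := by
    rw [hXd]
    have h1 : (V : Matrix m m ℂ) * D * (star (V : Matrix m m ℂ)) * M
        = (V : Matrix m m ℂ) * (D * ((star (V : Matrix m m ℂ)) * M)) := by
      simp only [Matrix.mul_assoc]
    rw [h1, Matrix.trace_mul_comm]
    have h2 : D * ((star (V : Matrix m m ℂ)) * M) * (V : Matrix m m ℂ) = D * N := by
      rw [hNdef]; simp only [Matrix.mul_assoc]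
    rw [h2, hD, trace_diagonal_mul]
  set U := hM.1.eigenvectorUnitary with hU
  set μs := hM.1.eigenvalues with hμs
  have hμ : ∀ j, 0 < μs j := hM.eigenvalues_pos
  set W := (star (U : Matrix m m ℂ)) * (V : Matrix m m ℂ) with hW
  have hNW : N = star W * Matrix.diagonal (fun j => ((μs j : ℝ) : ℂ)) * W := by
    rw [hW, Matrix.star_mul, star_star]
    conv_lhs => rw [hNdef, hM.1.spectral_theorem, Unitary.conjStarAlgAut_apply]
    simp only [Matrix.mul_assoc]
    rfl
  set w : m → m → ℝ := fun j i => ‖W j i‖^2 with hw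
  have hw0 : ∀ j i, 0 ≤ w j i := fun j i => sq_nonneg _
  have hNdiag : ∀ i, N i i = ((∑ j, μs j * w j i : ℝ) : ℂ) := by
    intro i
    rw [hNW, Matrix.mul_assoc, Matrix.mul_apply]
    push_cast
    apply Finset.sum_congr rfl
    intro j _
    rw [Matrix.diagonal_mul, Matrix.star_apply]
    rw [show (star (W j i)) * (((μs j : ℝ) : ℂ) * W j i)
        = ((μs j : ℝ) : ℂ) * ((star (W j i)) * W j i) by ring]
    rw [Complex.star_def, Complex.conj_mul']
    norm_cast
  have hWW : star W * W = 1 := by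
    rw [hW, Matrix.star_mul, star_star, Matrix.mul_assoc, ← Matrix.mul_assoc (U : Matrix m m ℂ),
      Unitary.mul_star_self_of_mem (SetLike.coe_mem U), Matrix.one_mul,
      Unitary.star_mul_self_of_mem (SetLike.coe_mem V)]
  have hWW' : W * star W = 1 := by
    rw [hW, Matrix.star_mul, star_star, Matrix.mul_assoc, ← Matrix.mul_assoc (V : Matrix m m ℂ),
      Unitary.mul_star_self_of_mem (SetLike.coe_mem V), Matrix.one_mul,
      Unitary.star_mul_self_of_mem (SetLike.coe_mem U)]
  have hcol : ∀ i, ∑ j, w j i = 1 := by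
    intro i
    have h := congr_fun (congr_fun hWW i) i
    rw [Matrix.mul_apply, Matrix.one_apply_eq] at h
    have : (∑ j, ((w j i : ℝ) : ℂ)) = 1 := by
      rw [← h]
      apply Finset.sum_congr rfl
      intro j _
      rw [Matrix.star_apply, Complex.star_def, Complex.conj_mul']
      norm_cast
    exact_mod_cast this
  have hrow : ∀ j, ∑ i, w j i = 1 := by
    intro j
    have h := congr_fun (congr_fun hWW' j) j
    rw [Matrix.mul_apply, Matrix.one_apply_eq] at h
    have : (∑ i, ((w j i : ℝ) : ℂ)) = 1 := by
      rw [← h]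
      apply Finset.sum_congr rfl
      intro i _
      rw [Matrix.star_apply, Complex.star_def, Complex.mul_conj']
      norm_cast
    exact_mod_cast this
  set ns : m → ℝ := fun i => ∑ j, μs j * w j i with hns'
  have hns : ∀ i, 0 < ns i := by
    intro i
    have := (posDef_diag_re_pos hN i).1
    rwa [hNdiag i, Complex.ofReal_re] at this
  have hxp : ∀ i, 0 < xs i := hX.eigenvalues_pos
  have young : ∀ i, p * (ns i) ^ (1/p) ≤ (ns i) * (xs i) ^ (1-p) - (1-p) * xs i :=
    fun i => scalar_young hp1 (hxp i) (hns i)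
  have jensen : ∀ i, (ns i) ^ (1/p) ≤ ∑ j, w j i * (μs j) ^ (1/p) := by
    intro i
    have hconv := convexOn_rpow_neg (q := 1/p) (div_neg_of_pos_of_neg one_pos hp1)
    have hj := hconv.map_sum_le (t := Finset.univ) (w := fun j => w j i) (p := μs)
      (fun j _ => hw0 j i) (hcol i) (fun j _ => hμ j)
    have he : (∑ j, w j i • μs j) = ns i := by
      rw [hns']
      exact Finset.sum_congr rfl fun j _ => by rw [smul_eq_mul, mul_comm]
    rwa [he] at hj
  have sumjensen : ∑ i, (ns i) ^ (1/p) ≤ ∑ j, (μs j) ^ (1/p) := by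
    calc ∑ i, (ns i) ^ (1/p) ≤ ∑ i, ∑ j, w j i * (μs j) ^ (1/p) :=
          Finset.sum_le_sum fun i _ => jensen i
      _ = ∑ j, (∑ i, w j i) * (μs j) ^ (1/p) := by
          rw [Finset.sum_comm]
          exact Finset.sum_congr rfl fun j _ => (Finset.sum_mul _ _ _).symm
      _ = ∑ j, (μs j) ^ (1/p) := by simp [hrow]
  have htX : X.trace.re = ∑ i, xs i := by
    rw [trace_eq_sum_eigenvalues hX.1, Complex.re_sum]
    simp
    rfl
  have htM : (mpow (Bᴴ * mpow A p * B) (1/p)).trace.re = ∑ j, (μs j) ^ (1/p) := by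
    rw [← hMdef, mpow, trace_mfun hM.1, Complex.re_sum]
    simp
    rfl
  have htE : (mpow A (p/2) * B * mpow X (1 - p) * Bᴴ * mpow A (p/2)).trace.re
      = ∑ i, (xs i) ^ (1-p) * ns i := by
    rw [htr, htr2]
    rw [show (∑ i, ((xs i ^ (1-p) : ℝ) : ℂ) * N i i)
        = ∑ i, (((xs i ^ (1-p)) * ns i : ℝ) : ℂ) from
      Finset.sum_congr rfl fun i _ => by rw [hNdiag i, ← Complex.ofReal_mul]]
    rw [Complex.re_sum]
    simp
  rw [htE, htM, htX]
  calc p * ∑ j, (μs j) ^ (1/p) ≤ p * ∑ i, (ns i) ^ (1/p) :=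
        mul_le_mul_of_nonpos_left sumjensen hp1.le
    _ = ∑ i, p * (ns i) ^ (1/p) := Finset.mul_sum _ _ _
    _ ≤ ∑ i, ((ns i) * (xs i) ^ (1-p) - (1-p) * xs i) :=
        Finset.sum_le_sum fun i _ => young i
    _ = ∑ i, (xs i) ^ (1-p) * ns i - (1-p) * ∑ i, xs i := by
        rw [Finset.sum_sub_distrib, ← Finset.mul_sum]
        congr 1
        exact Finset.sum_congr rfl fun i _ => by ring

lemma attain {A : Matrix m m ℂ} (hA : A.PosDef) {B : Matrix m m ℂ} (hB : IsUnit B)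
    {p : ℝ} (hp1 : p < 0) :
    (mpow A (p/2) * B * mpow (mpow (Bᴴ * mpow A p * B) (1/p)) (1 - p) * Bᴴ *
        mpow A (p/2)).trace.re -
      (1 - p) * (mpow (Bᴴ * mpow A p * B) (1/p)).trace.re
    = p * (mpow (Bᴴ * mpow A p * B) (1/p)).trace.re := by
  have hM : (Bᴴ * mpow A p * B).PosDef := posDef_conj (mpow_posDef hA p) hB
  set M := Bᴴ * mpow A p * B with hMdef
  have h1 : (mpow A (p/2) * B * mpow (mpow M (1/p)) (1 - p) * Bᴴ * mpow A (p/2)).trace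
      = (mpow (mpow M (1/p)) (1-p) * M).trace := by
    rw [tr_cyclic, mpow_add hA, show p/2 + p/2 = p by ring]
  have h2 : mpow (mpow M (1/p)) (1-p) * M = mpow M (1/p) := by
    rw [mpow_comp hM]
    have h3 : mpow M ((1/p)*(1-p)) * M = mpow M ((1/p)*(1-p)) * mpow M 1 := by
      rw [mpow_one hM]
    rw [h3, mpow_add hM, show (1/p)*(1-p) + 1 = 1/p by
      field_simp
      ring_nf
      rw [mul_inv_cancel₀ hp1.ne]
      ring]
  rw [h1, h2]
  ring


theorem variational_formula_neg_p {n : ℕ} (B : Matrix (Fin n) (Fin n) ℂ) (hB : IsUnit B)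
    (A : Matrix (Fin n) (Fin n) ℂ) (hA : A.PosDef) (p : ℝ) (hp0 : -1 ≤ p) (hp1 : p < 0) :
    IsGLB {x : ℝ | ∃ X : Matrix (Fin n) (Fin n) ℂ, X.PosDef ∧
        x = (mpow A (p/2) * B * mpow X (1 - p) * Bᴴ * mpow A (p/2)).trace.re -
          (1 - p) * X.trace.re}
      (p * (mpow (Bᴴ * mpow A p * B) (1/p)).trace.re) := by
  constructor
  · rintro y ⟨X, hX, rfl⟩
    exact lower_bound hA hB hp1 hX
  · intro b hb
    exact hb ⟨mpow (Bᴴ * mpow A p * B) (1/p),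
      mpow_posDef (posDef_conj (mpow_posDef hA p) hB) _, (attain hA hB hp1).symm⟩
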